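/- arXiv:1810.01134 — 2 statements merged into one kernel-verified Lean document; each statement's English description precedes it below -/
import Mathlib

section
/- Let a be real with 0 < a < 1 and set c = a(1−a). Then as k → +∞, Γ(k+1) / (Γ(ak + 1/2) Γ((1−a)k + 1/2)) · (k/(2π))^{−1/2} · a^{ak} (1−a)^{(1−a)k} = 1 + (1+2c)/(24ck) + O(k^{−2}). -/
set_option maxHeartbeats 1000000

open Real Filter Asymptotics Set Topology

namespace XiAsymp

noncomputable def M (x : ℝ) : ℝ := (x - 1/2) * Real.log x - x + Real.log (2 * π) / 2
noncomputable def E (x : ℝ) : ℝ := Real.log (Real.Gamma x) - M x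
noncomputable def g (x : ℝ) : ℝ := (x + 1/2) * Real.log (1 + 1/x) - 1


lemma deriv_aux {t : ℝ} (h1 : -1 < t) (h2 : t < 1) :
    HasDerivAt (fun t : ℝ => Real.log (1+t) - Real.log (1-t))
      (1/(1+t) + 1/(1-t)) t := by
  have ha : HasDerivAt (fun t : ℝ => (1:ℝ)+t) 1 t := by
    simpa using (hasDerivAt_id t).const_add 1
  have hb : HasDerivAt (fun t : ℝ => (1:ℝ)-t) (-1) t := by
    simpa [sub_eq_add_neg] using (hasDerivAt_id t).neg.const_add 1
  have hla := ha.log (by linarith)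
  have hlb := hb.log (by linarith)
  have h := hla.sub hlb
  refine h.congr_deriv ?_
  ring

theorem log_ratio_bounds {t : ℝ} (ht0 : 0 ≤ t) (ht1 : t ≤ 1/3) :
    2*t + (2/3)*t^3 ≤ Real.log (1+t) - Real.log (1-t) ∧
    Real.log (1+t) - Real.log (1-t) ≤ 2*t + (2/3)*t^3 + t^5 := by
  have key : ∀ p : ℝ → ℝ, ∀ dp : ℝ → ℝ,
      (∀ s : ℝ, -1 < s → s < 1 → HasDerivAt p (dp s) s) →
      (∀ s ∈ Ioo (0:ℝ) (1/3), 0 ≤ dp s) → p 0 ≤ p t := by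
    intro p dp hd hpos
    have hmono : MonotoneOn p (Icc (0:ℝ) (1/3)) := by
      apply monotoneOn_of_deriv_nonneg (convex_Icc _ _)
      · intro s hs
        exact (hd s (by linarith [hs.1]) (by linarith [hs.2])).continuousAt.continuousWithinAt
      · intro s hs
        rw [interior_Icc] at hs
        exact (hd s (by linarith [hs.1]) (by linarith [hs.2])).differentiableAt.differentiableWithinAt
      · intro s hs
        rw [interior_Icc] at hs
        rw [(hd s (by linarith [hs.1]) (by linarith [hs.2])).deriv]
        exact hpos s hs
    exact hmono (by constructor <;> norm_num) ⟨ht0, ht1⟩ ht0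
  constructor
  · have := key (fun s => Real.log (1+s) - Real.log (1-s) - (2*s + (2/3)*s^3))
      (fun s => 1/(1+s) + 1/(1-s) - (2 + 2*s^2))
      (fun s hs1 hs2 => by
        have := (deriv_aux hs1 hs2).sub
          (((hasDerivAt_id s).const_mul 2).add (((hasDerivAt_pow 3 s)).const_mul (2/3:ℝ)))
        refine this.congr_deriv ?_
        push_cast; ring)
      (fun s hs => by
        have h1 : (0:ℝ) < 1 + s := by linarith [hs.1]
        have h2 : (0:ℝ) < 1 - s := by nlinarith [hs.2]
        have : 1/(1+s) + 1/(1-s) - (2 + 2*s^2) = 2*s^4 / ((1+s)*(1-s)) := by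
          field_simp; ring
        rw [this]
        positivity)
    simp only [Real.log_one, add_zero, sub_zero] at this
    norm_num at this
    linarith
  · have := key (fun s => 2*s + (2/3)*s^3 + s^5 - (Real.log (1+s) - Real.log (1-s)))
      (fun s => 2 + 2*s^2 + 5*s^4 - (1/(1+s) + 1/(1-s)))
      (fun s hs1 hs2 => by
        have := ((((hasDerivAt_id s).const_mul 2).add
          (((hasDerivAt_pow 3 s)).const_mul (2/3:ℝ))).add (hasDerivAt_pow 5 s)).sub
          (deriv_aux hs1 hs2)
        refine this.congr_deriv ?_
        push_cast; ring)
      (fun s hs => by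
        have h1 : (0:ℝ) < 1 + s := by linarith [hs.1]
        have h2 : (0:ℝ) < 1 - s := by nlinarith [hs.2]
        have heq : 2 + 2*s^2 + 5*s^4 - (1/(1+s) + 1/(1-s))
            = s^4 * (5*(1-s^2) - 2) / ((1+s)*(1-s)) := by
          field_simp; ring
        rw [heq]
        have hs2 : s^2 ≤ (1/3)^2 := by nlinarith [hs.1, hs.2]
        have : (0:ℝ) ≤ 5*(1-s^2) - 2 := by nlinarith
        positivity)
    simp only [Real.log_one, add_zero, sub_zero] at this
    norm_num at this
    linarith


lemma g_sandwich {x : ℝ} (hx : 1 ≤ x) :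
    1/(3*(2*x+1)^2) ≤ g x ∧ g x ≤ 1/(3*(2*x+1)^2) + 1/(2*(2*x+1)^4) := by
  have hx0 : (0:ℝ) < x := by linarith
  obtain ⟨t, ht⟩ : ∃ t : ℝ, t = 1/(2*x+1) := ⟨_, rfl⟩
  have ht0 : 0 < t := by rw [ht]; positivity
  have ht1 : t ≤ 1/3 := by
    rw [ht, div_le_div_iff₀ (by linarith) (by norm_num)]; linarith
  have htx : t * (2*x+1) = 1 := by rw [ht]; field_simp
  have ht1' : t < 1 := by nlinarith
  have hinv : 2*x+1 = 1/t := by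
    rw [eq_div_iff (ne_of_gt ht0), mul_comm]; exact htx
  have hlog : Real.log (1+1/x) = Real.log (1+t) - Real.log (1-t) := by
    rw [← Real.log_div (by positivity) (by nlinarith)]
    congr 1
    have h1t : (1:ℝ) - t ≠ 0 := by nlinarith
    field_simp
    nlinarith [htx]
  obtain ⟨hl, hu⟩ := log_ratio_bounds ht0.le ht1
  have hxt : x + 1/2 = 1/(2*t) := by
    field_simp; linarith
  constructor
  · have : (x+1/2) * (2*t + (2/3)*t^3) - 1 ≤ g x := by
      unfold g; rw [hlog]
      nlinarith [mul_le_mul_of_nonneg_left hl (by linarith : (0:ℝ) ≤ x + 1/2)]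
    calc 1/(3*(2*x+1)^2) = (x+1/2) * (2*t + (2/3)*t^3) - 1 := by
          rw [hinv, hxt]; field_simp; ring
      _ ≤ g x := this
  · have : g x ≤ (x+1/2) * (2*t + (2/3)*t^3 + t^5) - 1 := by
      unfold g; rw [hlog]
      nlinarith [mul_le_mul_of_nonneg_left hu (by linarith : (0:ℝ) ≤ x + 1/2)]
    calc g x ≤ (x+1/2) * (2*t + (2/3)*t^3 + t^5) - 1 := this
      _ = 1/(3*(2*x+1)^2) + 1/(2*(2*x+1)^4) := by
          rw [hinv, hxt]; field_simp; ring

lemma g_nonneg {x : ℝ} (hx : 1 ≤ x) : 0 ≤ g x := by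
  have h := (g_sandwich hx).1
  have : (0:ℝ) < 1/(3*(2*x+1)^2) := by positivity
  linarith

lemma g_bounds {x : ℝ} (hx : 1 ≤ x) :
    |g x - 1/(12*x*(x+1))| ≤ (1/12) / x^4 := by
  obtain ⟨hl, hu⟩ := g_sandwich hx
  have hx0 : (0:ℝ) < x := by linarith
  rw [abs_le]
  constructor
  · have h1 : 1/(12*x*(x+1)) - 1/(3*(2*x+1)^2) ≤ (1/12)/x^4 := by
      rw [div_sub_div _ _ (by positivity) (by positivity), div_le_div_iff₀ (by positivity) (by positivity)]
      nlinarith [sq_nonneg x, pow_pos hx0 4]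
    linarith
  · have h2 : 1/(3*(2*x+1)^2) + 1/(2*(2*x+1)^4) - 1/(12*x*(x+1)) ≤ (1/12)/x^4 := by
      have e1 : 1/(3*(2*x+1)^2) ≤ 1/(12*x*(x+1)) := by
        rw [div_le_div_iff₀ (by positivity) (by positivity)]
        nlinarith
      have e2 : 1/(2*(2*x+1)^4) ≤ (1/12)/x^4 := by
        rw [div_le_div_iff₀ (by positivity) (by positivity)]
        nlinarith [pow_pos hx0 4, sq_nonneg x]
      linarith
    linarith



lemma E_rec {x : ℝ} (hx : 0 < x) : E x = g x + E (x + 1) := by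
  have hG : Real.log (Real.Gamma (x+1)) = Real.log x + Real.log (Real.Gamma x) := by
    rw [Real.Gamma_add_one hx.ne', Real.log_mul hx.ne' (Real.Gamma_pos_of_pos hx).ne']
  have hlog : Real.log (1 + 1/x) = Real.log (x+1) - Real.log x := by
    rw [← Real.log_div (by positivity) hx.ne']
    congr 1
    field_simp
  unfold E M g
  rw [hG, hlog]
  ring

lemma lim_aux (a b : ℝ) :
    Tendsto (fun x : ℝ => (x + a) * Real.log (1 + b/x)) atTop (𝓝 b) := by
  have h1 := Real.tendsto_mul_log_one_add_div_atTop b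
  have h2 : Tendsto (fun x : ℝ => Real.log (1 + b/x)) atTop (𝓝 0) := by
    have hb : Tendsto (fun x : ℝ => 1 + b/x) atTop (𝓝 (1 + 0)) :=
      tendsto_const_nhds.add (tendsto_const_nhds.div_atTop tendsto_id)
    rw [add_zero] at hb
    have := (Real.continuousAt_log one_ne_zero).tendsto.comp hb
    simpa [Function.comp_def] using this
  have h3 := h1.add (h2.const_mul a)
  rw [mul_zero, add_zero] at h3
  apply h3.congr
  intro x
  ring

lemma lim_aux_nat (a b : ℝ) :
    Tendsto (fun n : ℕ => ((n:ℝ) + a) * Real.log (1 + b/n)) atTop (𝓝 b) :=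
  (lim_aux a b).comp tendsto_natCast_atTop_atTop

lemma g_nat_tendsto : Tendsto (fun n : ℕ => g n) atTop (𝓝 0) := by
  have := (lim_aux_nat (1/2) 1).sub_const 1
  simpa [g, sub_self] using this

lemma E_nat_tendsto : Tendsto (fun n : ℕ => E ((n:ℝ) + 1)) atTop (𝓝 0) := by
  have key : ∀ n : ℕ, 1 ≤ n → E ((n:ℝ) + 1)
      = Real.log (Stirling.stirlingSeq n) - Real.log π / 2 - g n := by
    intro n hn
    have hn0 : (0:ℝ) < n := by exact_mod_cast hn
    have hfact : Real.log (Real.Gamma ((n:ℝ)+1)) = Real.log (n.factorial) := by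
      rw [Real.Gamma_nat_eq_factorial]
    have hstir := Stirling.log_stirlingSeq_formula n
    have hlog2n : Real.log (2*(n:ℝ)) = Real.log 2 + Real.log n :=
      Real.log_mul two_ne_zero hn0.ne'
    have hlogne : Real.log ((n:ℝ)/Real.exp 1) = Real.log n - 1 := by
      rw [Real.log_div hn0.ne' (Real.exp_ne_zero 1), Real.log_exp]
    have hlog2pi : Real.log (2*π) = Real.log 2 + Real.log π :=
      Real.log_mul two_ne_zero pi_ne_zero
    have hlog1n : Real.log (1 + 1/(n:ℝ)) = Real.log ((n:ℝ)+1) - Real.log n := by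
      rw [← Real.log_div (by positivity) hn0.ne']
      congr 1
      field_simp
    unfold E M g
    rw [hfact, hstir, hlog2n, hlogne, hlog2pi, hlog1n]
    ring
  have h1 : Tendsto (fun n : ℕ => Real.log (Stirling.stirlingSeq n)) atTop
      (𝓝 (Real.log (Real.sqrt π))) :=
    ((Real.continuousAt_log (by positivity)).tendsto.comp Stirling.tendsto_stirlingSeq_sqrt_pi)
  have hsq : Real.log (Real.sqrt π) = Real.log π / 2 := by
    rw [Real.log_sqrt pi_pos.le]
  rw [hsq] at h1
  have h2 := (h1.sub_const (Real.log π / 2)).sub g_nat_tendsto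
  simp only [sub_self, sub_zero] at h2
  apply h2.congr'
  filter_upwards [eventually_ge_atTop 1] with n hn
  exact (key n hn).symm


lemma E_nat_tendsto' : Tendsto (fun n : ℕ => E (n:ℝ)) atTop (𝓝 0) := by
  rw [← tendsto_add_atTop_iff_nat 1]
  apply E_nat_tendsto.congr
  intro n; push_cast; ring_nf

lemma logGamma_eq (y : ℝ) : Real.log (Real.Gamma y) = E y + M y := by unfold E; ring

lemma log_shift {n : ℕ} (hn : 1 ≤ n) (b : ℝ) (hb : 0 ≤ b) :
    Real.log ((n:ℝ) + b) = Real.log n + Real.log (1 + b/n) := by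
  have hn0 : (0:ℝ) < n := by exact_mod_cast hn
  rw [← Real.log_mul hn0.ne' (by positivity)]
  congr 1
  field_simp

lemma E_shift_tendsto_frac {s : ℝ} (hs0 : 0 ≤ s) (hs1 : s < 1) :
    Tendsto (fun n : ℕ => E (s + n)) atTop (𝓝 0) := by
  rcases eq_or_lt_of_le hs0 with h | hs0'
  · apply E_nat_tendsto'.congr
    intro n; rw [← h, zero_add]
  -- sandwich
  have conv := Real.convexOn_log_Gamma
  -- upper and lower sequences
  set A : ℕ → ℝ := fun n => s*((n:ℝ)+1/2)*Real.log (1+1/n) - ((n:ℝ)+s-1/2)*Real.log (1+s/n) with hA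
  set B : ℕ → ℝ := fun n => (2-s)*((n:ℝ)+1/2)*Real.log (1+1/n)
      - (1-s)*((n:ℝ)+3/2)*Real.log (1+2/n) - ((n:ℝ)+s-1/2)*Real.log (1+s/n) with hB
  have hAlim : Tendsto A atTop (𝓝 0) := by
    have h1 := (lim_aux_nat (1/2) 1).const_mul s
    have h2 := lim_aux_nat (s - 1/2) s
    have := h1.sub h2
    rw [mul_one, sub_self] at this
    apply this.congr
    intro n; simp only [hA]; ring_nf
  have hBlim : Tendsto B atTop (𝓝 0) := by
    have h1 := (lim_aux_nat (1/2) 1).const_mul (2-s)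
    have h2 := (lim_aux_nat (3/2) 2).const_mul (1-s)
    have h3 := lim_aux_nat (s - 1/2) s
    have := (h1.sub h2).sub h3
    have hz : (2-s)*1 - (1-s)*2 - s = 0 := by ring
    rw [mul_one] at this
    rw [show (2-s) - (1-s)*2 - s = (0:ℝ) by ring] at this
    apply this.congr
    intro n; simp only [hB]; ring_nf
  have hupper : ∀ᶠ n : ℕ in atTop, E (s + n) ≤ (1-s) * E n + s * E ((n:ℝ)+1) + A n := by
    filter_upwards [eventually_ge_atTop 1] with n hn
    have hn0 : (0:ℝ) < n := by exact_mod_cast hn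
    have hcx := conv.2 (mem_Ioi.mpr hn0) (mem_Ioi.mpr (by linarith : (0:ℝ) < (n:ℝ)+1))
      (by linarith : (0:ℝ) ≤ 1 - s) hs0 (by ring)
    simp only [smul_eq_mul, Function.comp_apply] at hcx
    have harg : (1-s) * (n:ℝ) + s * ((n:ℝ)+1) = s + n := by ring
    rw [harg] at hcx
    rw [logGamma_eq, logGamma_eq, logGamma_eq] at hcx
    have hMs : M (s + n) = ((n:ℝ)+s-1/2) * (Real.log n + Real.log (1+s/n)) - (s+n)
        + Real.log (2*π)/2 := by
      unfold M
      rw [show s + (n:ℝ) = (n:ℝ) + s by ring, log_shift hn s hs0]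
    have hM1 : M ((n:ℝ)+1) = ((n:ℝ)+1/2) * (Real.log n + Real.log (1+1/n)) - ((n:ℝ)+1)
        + Real.log (2*π)/2 := by
      unfold M
      rw [log_shift hn 1 (by norm_num)]
      ring
    have hMn : M (n:ℝ) = ((n:ℝ)-1/2) * Real.log n - n + Real.log (2*π)/2 := rfl
    rw [hMs, hM1, hMn] at hcx
    simp only [hA]
    nlinarith [hcx]
  have hlower : ∀ᶠ n : ℕ in atTop,
      (2-s) * E ((n:ℝ)+1) - (1-s) * E ((n:ℝ)+2) + B n ≤ E (s + n) := by
    filter_upwards [eventually_ge_atTop 1] with n hn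
    have hn0 : (0:ℝ) < n := by exact_mod_cast hn
    have h2s : (0:ℝ) < 2 - s := by linarith
    have hcx := conv.2 (mem_Ioi.mpr (by linarith : (0:ℝ) < s + n))
      (mem_Ioi.mpr (by linarith : (0:ℝ) < (n:ℝ)+2))
      (show (0:ℝ) ≤ 1/(2-s) from div_nonneg zero_le_one h2s.le)
      (show (0:ℝ) ≤ (1-s)/(2-s) from div_nonneg (by linarith) h2s.le)
      (show 1/(2-s) + (1-s)/(2-s) = 1 by field_simp; ring)
    simp only [smul_eq_mul, Function.comp_apply] at hcx
    have harg : 1/(2-s) * (s + (n:ℝ)) + (1-s)/(2-s) * ((n:ℝ)+2) = (n:ℝ)+1 := by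
      field_simp; ring
    rw [harg] at hcx
    rw [logGamma_eq, logGamma_eq, logGamma_eq] at hcx
    -- multiply through by (2-s)
    have hcx2 : (2-s) * (E ((n:ℝ)+1) + M ((n:ℝ)+1)) ≤ (E (s+n) + M (s+n))
        + (1-s) * (E ((n:ℝ)+2) + M ((n:ℝ)+2)) := by
      have := mul_le_mul_of_nonneg_left hcx h2s.le
      calc (2-s) * (E ((n:ℝ)+1) + M ((n:ℝ)+1))
          ≤ (2-s) * (1/(2-s) * (E (s+↑n) + M (s+↑n)) + (1-s)/(2-s) * (E (↑n+2) + M (↑n+2))) := this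
        _ = (E (s+n) + M (s+n)) + (1-s) * (E ((n:ℝ)+2) + M ((n:ℝ)+2)) := by
            field_simp
    have hMs : M (s + n) = ((n:ℝ)+s-1/2) * (Real.log n + Real.log (1+s/n)) - (s+n)
        + Real.log (2*π)/2 := by
      unfold M
      rw [show s + (n:ℝ) = (n:ℝ) + s by ring, log_shift hn s hs0]
    have hM1 : M ((n:ℝ)+1) = ((n:ℝ)+1/2) * (Real.log n + Real.log (1+1/n)) - ((n:ℝ)+1)
        + Real.log (2*π)/2 := by
      unfold M
      rw [log_shift hn 1 (by norm_num)]
      ring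
    have hM2 : M ((n:ℝ)+2) = ((n:ℝ)+3/2) * (Real.log n + Real.log (1+2/n)) - ((n:ℝ)+2)
        + Real.log (2*π)/2 := by
      unfold M
      rw [log_shift hn 2 (by norm_num)]
      ring
    rw [hMs, hM1, hM2] at hcx2
    simp only [hB]
    nlinarith [hcx2]
  -- limits of bounds
  have hE1 : Tendsto (fun n : ℕ => E ((n:ℝ)+1)) atTop (𝓝 0) := E_nat_tendsto
  have hE2 : Tendsto (fun n : ℕ => E ((n:ℝ)+2)) atTop (𝓝 0) := by
    have := E_nat_tendsto'.comp (tendsto_add_atTop_nat 2)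
    apply this.congr
    intro n
    simp only [Function.comp_apply]
    push_cast
    ring_nf
  have hU : Tendsto (fun n : ℕ => (1-s) * E n + s * E ((n:ℝ)+1) + A n) atTop (𝓝 0) := by
    have := ((E_nat_tendsto'.const_mul (1-s)).add (hE1.const_mul s)).add hAlim
    simpa using this
  have hL : Tendsto (fun n : ℕ => (2-s) * E ((n:ℝ)+1) - (1-s) * E ((n:ℝ)+2) + B n)
      atTop (𝓝 0) := by
    have := ((hE1.const_mul (2-s)).sub (hE2.const_mul (1-s))).add hBlim
    simpa using this
  exact tendsto_of_tendsto_of_tendsto_of_le_of_le' hL hU hlower hupper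

lemma E_shift_tendsto {x : ℝ} (hx : 1 ≤ x) :
    Tendsto (fun n : ℕ => E (x + n)) atTop (𝓝 0) := by
  have hx0 : (0:ℝ) ≤ x := by linarith
  set m : ℕ := ⌊x⌋₊ with hm
  set s : ℝ := x - m with hs
  have hs0 : 0 ≤ s := by
    have := Nat.floor_le hx0
    simp only [hs]; linarith
  have hs1 : s < 1 := by
    have := Nat.lt_floor_add_one x
    simp only [hs]; linarith
  have h := (E_shift_tendsto_frac hs0 hs1).comp (tendsto_add_atTop_nat m)
  apply h.congr
  intro n
  simp only [Function.comp_apply, hs]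
  push_cast
  ring_nf


lemma E_est {x : ℝ} (hx : 1 ≤ x) : |E x - 1/(12*x)| ≤ 1/(6*x^3) := by
  have hx0 : (0:ℝ) < x := by linarith
  -- partial sums
  have hpart : ∀ N : ℕ, ∑ i ∈ Finset.range N, g (x + i) = E x - E (x + N) := by
    intro N
    induction N with
    | zero => simp
    | succ N ih =>
      rw [Finset.sum_range_succ, ih]
      have h1 : E (x + N) = g (x + N) + E (x + N + 1) := E_rec (by positivity)
      have h2 : x + (N+1:ℕ) = x + N + 1 := by push_cast; ring
      rw [h2, h1]
      ring
  have hgsum : HasSum (fun n : ℕ => g (x + n)) (E x) := by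
    rw [hasSum_iff_tendsto_nat_of_nonneg
      (fun n => g_nonneg (by have := Nat.cast_nonneg (α := ℝ) n; linarith)) _]
    simp_rw [hpart]
    have := (tendsto_const_nhds (x := E x)).sub (E_shift_tendsto hx)
    simpa using this
  -- telescoping sums
  have htele : ∀ (f : ℕ → ℝ), (Tendsto f atTop (𝓝 0)) → (∀ n, 0 ≤ f n - f (n+1)) →
      HasSum (fun n => f n - f (n+1)) (f 0) := by
    intro f hf hnn
    rw [hasSum_iff_tendsto_nat_of_nonneg hnn _]
    have hsum : ∀ N, ∑ i ∈ Finset.range N, (f i - f (i+1)) = f 0 - f N := by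
      intro N
      induction N with
      | zero => simp
      | succ N ih => rw [Finset.sum_range_succ, ih]; ring
    simp_rw [hsum]
    simpa using (tendsto_const_nhds (x := f 0)).sub hf
  have hnat : ∀ c : ℝ, 0 < c → Tendsto (fun n : ℕ => 1/(c*(x+n))) atTop (𝓝 0) := by
    intro c hc
    simp_rw [one_div]
    apply Tendsto.comp tendsto_inv_atTop_zero
    apply Tendsto.const_mul_atTop hc
    exact tendsto_atTop_add_const_left atTop x tendsto_natCast_atTop_atTop
  have hT : HasSum (fun n : ℕ => 1/(12*(x+n)) - 1/(12*(x+n+1))) (1/(12*x)) := by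
    have := htele (fun n : ℕ => 1/(12*(x+n))) (hnat 12 (by norm_num))
      (fun n => by
        have h1 : (0:ℝ) < x + n := by positivity
        have h2 : (0:ℝ) < x + (n+1:ℕ) := by positivity
        rw [sub_nonneg, div_le_div_iff₀ (by positivity) (by positivity)]
        push_cast
        nlinarith)
    simp only [Nat.cast_zero, add_zero, Nat.cast_add, Nat.cast_one] at this
    convert this using 2 with n
    push_cast
    ring_nf
  have hU : HasSum (fun n : ℕ => 1/(x+n) - 1/(x+n+1)) (1/x) := by
    have := htele (fun n : ℕ => 1/(x+n)) (by simpa using hnat 1 one_pos)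
      (fun n => by
        rw [sub_nonneg, div_le_div_iff₀ (by positivity) (by positivity)]
        push_cast
        nlinarith)
    simp only [Nat.cast_zero, add_zero, Nat.cast_add, Nat.cast_one] at this
    convert this using 2 with n
    push_cast
    ring_nf
  -- difference series
  have hd : HasSum (fun n : ℕ => g (x+n) - (1/(12*(x+n)) - 1/(12*(x+n+1)))) (E x - 1/(12*x)) :=
    hgsum.sub hT
  have habs : ∀ n : ℕ, |g (x+n) - (1/(12*(x+n)) - 1/(12*(x+n+1)))|
      ≤ (1/(6*x^2)) * (1/(x+n) - 1/(x+n+1)) := by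
    intro n
    have hy : (1:ℝ) ≤ x + n := by
      have : (0:ℝ) ≤ n := Nat.cast_nonneg n
      linarith
    have hxy' : x ≤ x + (n:ℝ) := by
      have : (0:ℝ) ≤ n := Nat.cast_nonneg n
      linarith
    obtain ⟨y, hyd⟩ : ∃ y : ℝ, x + (n:ℝ) = y := ⟨_, rfl⟩
    rw [hyd] at hy hxy' ⊢
    have hy0 : (0:ℝ) < y := by linarith
    have hg := g_bounds hy
    have e1 : 1/(12*y) - 1/(12*(y+1)) = 1/(12*y*(y+1)) := by
      field_simp
      ring
    have e2 : 1/y - 1/(y+1) = 1/(y*(y+1)) := by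
      field_simp
      ring
    rw [e1, e2]
    refine hg.trans ?_
    have hrhs : 1/(6*x^2) * (1/(y*(y+1))) = 1/(6*x^2*(y*(y+1))) := by
      field_simp
    rw [hrhs, div_le_div_iff₀ (by positivity) (by positivity)]
    have hxy : x ≤ y := hxy'
    have hx2y2 : x^2 ≤ y^2 := by nlinarith
    have h5 : x^2*(y*(y+1)) ≤ y^2*(y*(y+1)) :=
      mul_le_mul_of_nonneg_right hx2y2 (by positivity)
    have h6 : y^2*(y*(y+1)) ≤ 2*y^4 := by
      nlinarith [mul_le_mul_of_nonneg_left (show y+1 ≤ 2*y by linarith)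
        (by positivity : (0:ℝ) ≤ y^3)]
    nlinarith [h5, h6]
  -- summing up
  have hbsum : Summable (fun n : ℕ => (1/(6*x^2)) * (1/(x+n) - 1/(x+n+1))) :=
    hU.summable.mul_left _
  have hs1 : Summable (fun n : ℕ => |g (x+n) - (1/(12*(x+n)) - 1/(12*(x+n+1)))|) :=
    Summable.of_nonneg_of_le (fun n => abs_nonneg _) habs hbsum
  have h1 : |E x - 1/(12*x)| ≤ ∑' n : ℕ, |g (x+n) - (1/(12*(x+n)) - 1/(12*(x+n+1)))| := by
    rw [← hd.tsum_eq]
    have := norm_tsum_le_tsum_norm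
      (f := fun n : ℕ => g (x+n) - (1/(12*(x+n)) - 1/(12*(x+n+1))))
      (by simpa only [Real.norm_eq_abs] using hs1)
    simpa only [Real.norm_eq_abs] using this
  have h2 : ∑' n : ℕ, |g (x+n) - (1/(12*(x+n)) - 1/(12*(x+n+1)))|
      ≤ ∑' n : ℕ, (1/(6*x^2)) * (1/(x+n) - 1/(x+n+1)) :=
    hs1.tsum_le_tsum habs hbsum
  have h3 : ∑' n : ℕ, (1/(6*x^2)) * (1/(x+n) - 1/(x+n+1)) = (1/(6*x^2)) * (1/x) := by
    rw [tsum_mul_left, hU.tsum_eq]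
  have h4 : (1/(6*x^2)) * (1/x) = 1/(6*x^3) := by
    field_simp
  linarith


lemma g_small {x : ℝ} (hx : 1 ≤ x) : |g x| ≤ 1/x^2 := by
  obtain ⟨h1, h2⟩ := g_sandwich hx
  have hx0 : (0:ℝ) < x := by linarith
  rw [abs_le]
  constructor
  · have : (0:ℝ) < 1/(3*(2*x+1)^2) := by positivity
    have h3 : (0:ℝ) ≤ 1/x^2 := by positivity
    linarith
  · have e1 : 1/(3*(2*x+1)^2) ≤ (1/2)/x^2 := by
      rw [div_le_div_iff₀ (by positivity) (by positivity)]
      nlinarith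
    have e2 : 1/(2*(2*x+1)^4) ≤ (1/2)/x^2 := by
      rw [div_le_div_iff₀ (by positivity) (by positivity)]
      nlinarith [sq_nonneg x, pow_pos hx0 4, sq_nonneg (x-1)]
    have : (1/2)/x^2 + (1/2)/x^2 = 1/x^2 := by ring
    linarith

lemma log_quad {u : ℝ} (h0 : 0 ≤ u) (h1 : u ≤ 1) :
    |Real.log (1+u) - (u - u^2/2)| ≤ u^3 := by
  have key : ∀ p : ℝ → ℝ, ∀ dp : ℝ → ℝ,
      (∀ s : ℝ, -1 < s → HasDerivAt p (dp s) s) →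
      (∀ s ∈ Ioo (0:ℝ) 1, 0 ≤ dp s) → p 0 ≤ p u := by
    intro p dp hd hpos
    have hmono : MonotoneOn p (Icc (0:ℝ) 1) := by
      apply monotoneOn_of_deriv_nonneg (convex_Icc _ _)
      · intro s hs
        exact (hd s (by linarith [hs.1])).continuousAt.continuousWithinAt
      · intro s hs
        rw [interior_Icc] at hs
        exact (hd s (by linarith [hs.1])).differentiableAt.differentiableWithinAt
      · intro s hs
        rw [interior_Icc] at hs
        rw [(hd s (by linarith [hs.1])).deriv]
        exact hpos s hs
    exact hmono (by constructor <;> norm_num) ⟨h0, h1⟩ h0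
  have hlog : ∀ s : ℝ, -1 < s → HasDerivAt (fun s : ℝ => Real.log (1+s)) (1/(1+s)) s := by
    intro s hs
    have ha : HasDerivAt (fun s : ℝ => (1:ℝ)+s) 1 s := by
      simpa using (hasDerivAt_id s).const_add 1
    simpa using ha.log (by linarith)
  rw [abs_le]
  constructor
  ·
    have := key (fun s => Real.log (1+s) - (s - s^2/2)) (fun s => 1/(1+s) - (1 - s))
      (fun s hs => by
        have := (hlog s hs).sub (((hasDerivAt_id s)).sub
          ((hasDerivAt_pow 2 s).div_const 2))
        refine this.congr_deriv ?_
        push_cast; ring)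
      (fun s hs => by
        have h1 : (0:ℝ) < 1 + s := by linarith [hs.1]
        have heq : 1/(1+s) - (1-s) = s^2/(1+s) := by field_simp; ring
        rw [heq]; positivity)
    simp only [Real.log_one, add_zero, sub_zero] at this
    norm_num at this
    nlinarith [pow_nonneg h0 3]
  · have := key (fun s => s - s^2/2 + s^3 - Real.log (1+s))
      (fun s => 1 - s + 3*s^2 - 1/(1+s))
      (fun s hs => by
        have := (((hasDerivAt_id s).sub ((hasDerivAt_pow 2 s).div_const 2)).add
          (hasDerivAt_pow 3 s)).sub (hlog s hs)
        refine this.congr_deriv ?_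
        push_cast; ring)
      (fun s hs => by
        have h1 : (0:ℝ) < 1 + s := by linarith [hs.1]
        have heq : 1 - s + 3*s^2 - 1/(1+s) = (s^2*(3*s+2))/(1+s) := by field_simp; ring
        rw [heq]
        have : (0:ℝ) ≤ 3*s+2 := by nlinarith [hs.1]
        positivity)
    simp only [Real.log_one, add_zero, sub_zero] at this
    norm_num at this
    linarith

lemma ylog_est {y : ℝ} (hy : 1 ≤ y) :
    |y * Real.log (1 + 1/(2*y)) - (1/2 - 1/(8*y))| ≤ 1/y^2 := by
  have hy0 : (0:ℝ) < y := by linarith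
  obtain ⟨u, hu⟩ : ∃ u : ℝ, 1/(2*y) = u := ⟨_, rfl⟩
  rw [hu]
  have hu0 : 0 ≤ u := by rw [← hu]; positivity
  have hu1 : u ≤ 1 := by
    rw [← hu, div_le_one (by positivity)]; linarith
  have hq := log_quad hu0 hu1
  have hid : y*(u - u^2/2) = 1/2 - 1/(8*y) := by
    rw [← hu]; field_simp; ring
  have hcube : y * u^3 = 1/(8*y^2) := by
    rw [← hu]; field_simp; ring
  have h2 : |y * (Real.log (1+u) - (u - u^2/2))| ≤ y * u^3 := by
    rw [abs_mul, abs_of_pos hy0]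
    exact mul_le_mul_of_nonneg_left hq hy0.le
  have h3 : y * Real.log (1+u) - (1/2 - 1/(8*y)) = y * (Real.log (1+u) - (u - u^2/2)) := by
    rw [← hid]; ring
  calc |y * Real.log (1+u) - (1/2 - 1/(8*y))|
      = |y * (Real.log (1+u) - (u - u^2/2))| := by rw [h3]
    _ ≤ y * u^3 := h2
    _ = 1/(8*y^2) := hcube
    _ ≤ 1/y^2 := by
        rw [div_le_div_iff₀ (by positivity) (by positivity)]
        nlinarith [sq_nonneg y]

lemma log_shift' {y b : ℝ} (hy : 0 < y) (hb : 0 ≤ b) :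
    Real.log (y + b) = Real.log y + Real.log (1 + b/y) := by
  rw [← Real.log_mul hy.ne' (by positivity)]
  congr 1
  field_simp

lemma inv12_diff {y d : ℝ} (hy : 1 ≤ y) (hd0 : 0 ≤ d) (hd1 : d ≤ 1) :
    |1/(12*(y+d)) - 1/(12*y)| ≤ 1/y^2 := by
  have hy0 : (0:ℝ) < y := by linarith
  have h1 : 1/(12*(y+d)) ≤ 1/(12*y) := by
    rw [div_le_div_iff₀ (by positivity) (by positivity)]
    nlinarith
  rw [abs_sub_comm, abs_of_nonneg (by linarith)]
  have heq : 1/(12*y) - 1/(12*(y+d)) = d/(12*y*(y+d)) := by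
    field_simp
    ring
  rw [heq, div_le_div_iff₀ (by positivity) (by positivity)]
  nlinarith [sq_nonneg y, mul_pos hy0 hy0]

theorem main (a : ℝ) (ha0 : 0 < a) (ha1 : a < 1) :
    ∃ C K : ℝ, ∀ k : ℝ, k ≥ K →
      |Real.Gamma (k + 1) / (Real.Gamma (a * k + 1 / 2) * Real.Gamma ((1 - a) * k + 1 / 2)) *
          (k / (2 * Real.pi)) ^ (-(1 : ℝ) / 2) *
          a ^ (a * k) * (1 - a) ^ ((1 - a) * k) -
        (1 + (1 + 2 * (a * (1-a))) / (24 * (a * (1-a)) * k))| ≤ C / k ^ 2 := by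
  have hb0 : 0 < 1 - a := by linarith
  obtain ⟨β, hβ⟩ : ∃ x : ℝ, x = (1 + 2*(a*(1-a)))/(24*(a*(1-a))) := ⟨_, rfl⟩
  obtain ⟨C1, hC1⟩ : ∃ x : ℝ,
      x = 3 + 2/a^2 + 2/(1-a)^2 + 1/(6*a^3) + 1/(6*(1-a)^3) := ⟨_, rfl⟩
  have hC1pos : 0 < C1 := by rw [hC1]; positivity
  refine ⟨(|β| + C1)^2 + C1, 1 + 1/a + 1/(1-a) + (|β| + C1), ?_⟩
  intro k hk
  have h1a : 0 < 1/a := by positivity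
  have h1b : 0 < 1/(1-a) := by positivity
  have hβ0 : 0 ≤ |β| := abs_nonneg β
  have hk1 : 1 ≤ k := by linarith
  have hk0 : 0 < k := by linarith
  have hak1 : 1 ≤ a*k := by
    have : 1/a ≤ k := by linarith
    rw [div_le_iff₀ ha0] at this
    nlinarith
  have hbk1 : 1 ≤ (1-a)*k := by
    have : 1/(1-a) ≤ k := by linarith
    rw [div_le_iff₀ hb0] at this
    nlinarith
  have hkβ : |β| + C1 ≤ k := by linarith
  have hak0 : (0:ℝ) < a*k := by linarith
  have hbk0 : (0:ℝ) < (1-a)*k := by linarith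
  have hA1 : (1:ℝ) ≤ a*k + 1/2 := by linarith
  have hB1 : (1:ℝ) ≤ (1-a)*k + 1/2 := by linarith
  have hK1 : (1:ℝ) ≤ k + 1 := by linarith
  -- define G
  obtain ⟨G, hGdef⟩ : ∃ G : ℝ, G =
      Real.log (Real.Gamma (k+1)) - Real.log (Real.Gamma (a*k+1/2))
      - Real.log (Real.Gamma ((1-a)*k+1/2))
      - (Real.log k - Real.log (2*π))/2 + a*k*Real.log a + (1-a)*k*Real.log (1-a) :=
    ⟨_, rfl⟩
  -- F = exp G
  have hF : Real.Gamma (k + 1) / (Real.Gamma (a * k + 1 / 2) * Real.Gamma ((1 - a) * k + 1 / 2)) *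
      (k / (2 * Real.pi)) ^ (-(1 : ℝ) / 2) * a ^ (a * k) * (1 - a) ^ ((1 - a) * k)
      = Real.exp G := by
    rw [Real.rpow_def_of_pos (show (0:ℝ) < k/(2*π) by positivity),
        Real.rpow_def_of_pos ha0, Real.rpow_def_of_pos hb0,
        show Real.Gamma (k+1) = Real.exp (Real.log (Real.Gamma (k+1))) from
          (Real.exp_log (Real.Gamma_pos_of_pos (by linarith))).symm,
        show Real.Gamma (a*k+1/2) = Real.exp (Real.log (Real.Gamma (a*k+1/2))) from
          (Real.exp_log (Real.Gamma_pos_of_pos (by linarith))).symm,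
        show Real.Gamma ((1-a)*k+1/2) = Real.exp (Real.log (Real.Gamma ((1-a)*k+1/2))) from
          (Real.exp_log (Real.Gamma_pos_of_pos (by linarith))).symm,
        ← Real.exp_add, ← Real.exp_sub, ← Real.exp_add, ← Real.exp_add, ← Real.exp_add]
    congr 1
    rw [hGdef, Real.log_div hk0.ne' (by positivity)]
    ring
  -- log expansions
  have hlogk1 : Real.log (k+1) = Real.log k + Real.log (1+1/k) := by
    simpa using log_shift' hk0 (zero_le_one)
  have hlogak : Real.log (a*k+1/2) = Real.log a + Real.log k
      + Real.log (1+1/(2*(a*k))) := by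
    rw [log_shift' hak0 (by norm_num : (0:ℝ) ≤ 1/2), Real.log_mul ha0.ne' hk0.ne',
      show (1:ℝ)/2/(a*k) = 1/(2*(a*k)) from div_div 1 2 (a*k)]
  have hlogbk : Real.log ((1-a)*k+1/2) = Real.log (1-a) + Real.log k
      + Real.log (1+1/(2*((1-a)*k))) := by
    rw [log_shift' hbk0 (by norm_num : (0:ℝ) ≤ 1/2), Real.log_mul hb0.ne' hk0.ne',
      show (1:ℝ)/2/((1-a)*k) = 1/(2*((1-a)*k)) from div_div 1 2 ((1-a)*k)]
  -- structural identity
  have hG1 : G = ((k+1/2)*Real.log (1+1/k)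
      - a*k*Real.log (1+1/(2*(a*k))) - (1-a)*k*Real.log (1+1/(2*((1-a)*k))))
      + E (k+1) - E (a*k+1/2) - E ((1-a)*k+1/2) := by
    rw [hGdef]
    unfold E M
    rw [hlogk1, hlogak, hlogbk]
    ring
  -- the exact scalar cancellation
  have hZ : 1 - (1/2 - 1/(8*(a*k))) - (1/2 - 1/(8*((1-a)*k)))
      + 1/(12*k) - 1/(12*(a*k)) - 1/(12*((1-a)*k)) - β/k = 0 := by
    rw [hβ]
    field_simp
    ring
  -- decomposition of G - β/k
  have hdecomp : G - β/k
      = g k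
        - (a*k*Real.log (1+1/(2*(a*k))) - (1/2 - 1/(8*(a*k))))
        - ((1-a)*k*Real.log (1+1/(2*((1-a)*k))) - (1/2 - 1/(8*((1-a)*k))))
        + (E (k+1) - 1/(12*(k+1))) + (1/(12*(k+1)) - 1/(12*k))
        - (E (a*k+1/2) - 1/(12*(a*k+1/2))) - (1/(12*(a*k+1/2)) - 1/(12*(a*k)))
        - (E ((1-a)*k+1/2) - 1/(12*((1-a)*k+1/2)))
        - (1/(12*((1-a)*k+1/2)) - 1/(12*((1-a)*k)))
        + (1 - (1/2 - 1/(8*(a*k))) - (1/2 - 1/(8*((1-a)*k)))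
          + 1/(12*k) - 1/(12*(a*k)) - 1/(12*((1-a)*k)) - β/k) := by
    rw [hG1]
    unfold g
    ring
  rw [hZ, add_zero] at hdecomp
  -- piecewise bounds
  have e1 := abs_le.mp (g_small hk1)
  have e2 : |a*k * Real.log (1 + 1/(2*(a*k))) - (1/2 - 1/(8*(a*k)))|
      ≤ (1/a^2)*(1/k^2) := by
    refine (ylog_est hak1).trans (le_of_eq ?_)
    rw [mul_pow, div_mul_div_comm, one_mul]
  have e2' := abs_le.mp e2
  have e3 : |(1-a)*k * Real.log (1 + 1/(2*((1-a)*k))) - (1/2 - 1/(8*((1-a)*k)))|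
      ≤ (1/(1-a)^2)*(1/k^2) := by
    refine (ylog_est hbk1).trans (le_of_eq ?_)
    rw [mul_pow, div_mul_div_comm, one_mul]
  have e3' := abs_le.mp e3
  have e4 : |E (k+1) - 1/(12*(k+1))| ≤ 1/k^2 := by
    refine (E_est hK1).trans ?_
    rw [div_le_div_iff₀ (by positivity) (by positivity)]
    nlinarith [sq_nonneg k]
  have e4' := abs_le.mp e4
  have e5 : |1/(12*(k+1)) - 1/(12*k)| ≤ 1/k^2 := inv12_diff hk1 zero_le_one le_rfl
  have e5' := abs_le.mp e5
  have e6 : |E (a*k+1/2) - 1/(12*(a*k+1/2))| ≤ (1/(6*a^3))*(1/k^2) := by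
    refine (E_est hA1).trans ?_
    have h1 : (1/(6*a^3))*(1/k^2) = 1/(6*a^3*k^2) := by
      field_simp
    rw [h1, div_le_div_iff₀ (by positivity) (by positivity)]
    have h2 : a^3*k^2 ≤ (a*k)^3 := by
      have : a^3*k^2*1 ≤ a^3*k^2*k := by
        apply mul_le_mul_of_nonneg_left hk1 (by positivity)
      calc a^3*k^2 = a^3*k^2*1 := by ring
        _ ≤ a^3*k^2*k := this
        _ = (a*k)^3 := by ring
    have h3 : (a*k)^3 ≤ (a*k+1/2)^3 :=
      pow_le_pow_left₀ hak0.le (by linarith) 3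
    linarith
  have e6' := abs_le.mp e6
  have e7 : |1/(12*(a*k+1/2)) - 1/(12*(a*k))| ≤ (1/a^2)*(1/k^2) := by
    refine (inv12_diff hak1 (by norm_num) (by norm_num)).trans (le_of_eq ?_)
    rw [mul_pow, div_mul_div_comm, one_mul]
  have e7' := abs_le.mp e7
  have e8 : |E ((1-a)*k+1/2) - 1/(12*((1-a)*k+1/2))| ≤ (1/(6*(1-a)^3))*(1/k^2) := by
    refine (E_est hB1).trans ?_
    have h1 : (1/(6*(1-a)^3))*(1/k^2) = 1/(6*(1-a)^3*k^2) := by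
      field_simp
    rw [h1, div_le_div_iff₀ (by positivity) (by positivity)]
    have h2 : (1-a)^3*k^2 ≤ ((1-a)*k)^3 := by
      have : (1-a)^3*k^2*1 ≤ (1-a)^3*k^2*k := by
        apply mul_le_mul_of_nonneg_left hk1 (by positivity)
      calc (1-a)^3*k^2 = (1-a)^3*k^2*1 := by ring
        _ ≤ (1-a)^3*k^2*k := this
        _ = ((1-a)*k)^3 := by ring
    have h3 : ((1-a)*k)^3 ≤ ((1-a)*k+1/2)^3 :=
      pow_le_pow_left₀ hbk0.le (by linarith) 3
    linarith
  have e8' := abs_le.mp e8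
  have e9 : |1/(12*((1-a)*k+1/2)) - 1/(12*((1-a)*k))| ≤ (1/(1-a)^2)*(1/k^2) := by
    refine (inv12_diff hbk1 (by norm_num) (by norm_num)).trans (le_of_eq ?_)
    rw [mul_pow, div_mul_div_comm, one_mul]
  have e9' := abs_le.mp e9
  -- total bound on G - β/k
  have hGb : |G - β/k| ≤ C1/k^2 := by
    have hsum : 1/k^2 + (1/a^2)*(1/k^2) + (1/(1-a)^2)*(1/k^2) + 1/k^2 + 1/k^2
        + (1/(6*a^3))*(1/k^2) + (1/a^2)*(1/k^2)
        + (1/(6*(1-a)^3))*(1/k^2) + (1/(1-a)^2)*(1/k^2) = C1/k^2 := by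
      rw [hC1]
      ring
    rw [← hsum, abs_le]
    constructor
    · rw [hdecomp]; linarith [e1.1, e2'.1, e3'.1, e4'.1, e5'.1, e6'.1,
        e7'.1, e8'.1, e9'.1, e1.2, e2'.2, e3'.2, e4'.2, e5'.2, e6'.2, e7'.2, e8'.2, e9'.2]
    · rw [hdecomp]; linarith [e1.1, e2'.1, e3'.1, e4'.1, e5'.1, e6'.1,
        e7'.1, e8'.1, e9'.1, e1.2, e2'.2, e3'.2, e4'.2, e5'.2, e6'.2, e7'.2, e8'.2, e9'.2]
  -- G is small
  have hβk : |β/k| = |β|/k := by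
    rw [abs_div, abs_of_pos hk0]
  have hC1k : C1/k^2 ≤ C1/k := by
    rw [div_le_div_iff₀ (by positivity) (by positivity)]
    have hcc : C1*k*1 ≤ C1*k*k :=
      mul_le_mul_of_nonneg_left hk1 (by positivity)
    calc C1 * k = C1*k*1 := by ring
      _ ≤ C1*k*k := hcc
      _ = C1 * k^2 := by ring
  have hGle : |G| ≤ (|β| + C1)/k := by
    have h := abs_add_le (β/k) (G - β/k)
    have h2 : β/k + (G - β/k) = G := by ring
    rw [h2] at h
    rw [hβk] at h
    have : |β|/k + C1/k = (|β| + C1)/k := by ring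
    linarith [hGb, hC1k]
  have hGsm : |G| ≤ 1 := by
    refine hGle.trans ?_
    rw [div_le_one hk0]
    exact hkβ
  have hexp := Real.abs_exp_sub_one_sub_id_le hGsm
  have hG2 : G^2 ≤ (|β| + C1)^2/k^2 := by
    have h1 : |G|^2 ≤ ((|β| + C1)/k)^2 := by
      apply pow_le_pow_left₀ (abs_nonneg G) hGle
    rw [sq_abs] at h1
    rw [div_pow] at h1
    exact h1
  -- final
  have happrox : 1 + (1 + 2*(a*(1-a))) / (24*(a*(1-a))*k) = 1 + β/k := by
    rw [hβ]
    field_simp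
  rw [hF, happrox]
  have hsplit : Real.exp G - (1 + β/k) = (Real.exp G - 1 - G) + (G - β/k) := by ring
  rw [hsplit]
  have htri := abs_add_le (Real.exp G - 1 - G) (G - β/k)
  have hfin : ((|β| + C1)^2 + C1)/k^2 = (|β| + C1)^2/k^2 + C1/k^2 := by ring
  rw [hfin]
  linarith [htri, hexp, hG2, hGb]

end XiAsymp

theorem Xi_asymptotics (a : ℝ) (ha0 : 0 < a) (ha1 : a < 1) :
    let c := a * (1 - a)
    ∃ C K : ℝ, ∀ k : ℝ, k ≥ K →
      |Real.Gamma (k + 1) / (Real.Gamma (a * k + 1 / 2) * Real.Gamma ((1 - a) * k + 1 / 2)) *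
          (k / (2 * Real.pi)) ^ (-(1 : ℝ) / 2) *
          a ^ (a * k) * (1 - a) ^ ((1 - a) * k) -
        (1 + (1 + 2 * c) / (24 * c * k))| ≤ C / k ^ 2 := by
  intro c
  exact XiAsymp.main a ha0 ha1
end

section
/- Let f(τ) = τ^{−1/2}(1−τ)^{−1/2}/(1 − zτ) and ψ(τ) = a log τ + (1−a) log(1−τ) with 0 < a < 1, c = a(1−a), and zτ ≠ 1 near τ = a. Then the coefficient c₂(a,z) = −(1/ψ''(a))·(F₂ − Ψ₃F₁ + (5/12)Ψ₃² − (1/4)Ψ₄), where Ψ_k = ψ^(k)(a)/ψ''(a) and F_k = f^(k)(a)/f(a), evaluates to c₂(a,z) = 2cz²/(1−az)² + (1−2a)z/(1−az) − (1+2c)/(12c). -/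
set_option maxHeartbeats 1000000

open Real Filter Set Topology

theorem c2_coefficient (a z : ℝ) (ha0 : 0 < a) (ha1 : a < 1) (haz : a * z ≠ 1) :
    let c := a * (1 - a)
    let ψ : ℝ → ℝ := fun τ => a * Real.log τ + (1 - a) * Real.log (1 - τ)
    let f : ℝ → ℝ := fun τ => τ ^ (-(1 : ℝ) / 2) * (1 - τ) ^ (-(1 : ℝ) / 2) / (1 - z * τ)
    let Ψ : ℕ → ℝ := fun n => iteratedDeriv n ψ a / iteratedDeriv 2 ψ a
    let F : ℕ → ℝ := fun n => iteratedDeriv n f a / f a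
    (-(1 / iteratedDeriv 2 ψ a) *
        (F 2 - Ψ 3 * F 1 + (5 / 12) * (Ψ 3) ^ 2 - (1 / 4) * Ψ 4) =
      2 * c * z ^ 2 / (1 - a * z) ^ 2 + (1 - 2 * a) * z / (1 - a * z) -
        (1 + 2 * c) / (12 * c)) := by
  intro c ψ f Ψ F
  have ha0' : a ≠ 0 := ha0.ne'
  have h1a : (0:ℝ) < 1 - a := by linarith
  have h1a' : (1:ℝ) - a ≠ 0 := h1a.ne'
  have hza : 1 - z * a ≠ 0 := by
    intro h
    exact haz (by nlinarith [sub_eq_zero.mp h])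
  set U : Set ℝ := {τ | 0 < τ ∧ τ < 1 ∧ 1 - z * τ ≠ 0} with hUdef
  have haU : a ∈ U := ⟨ha0, ha1, hza⟩
  have hUopen : IsOpen U := by
    have : U = Ioo 0 1 ∩ (fun τ : ℝ => 1 - z * τ) ⁻¹' ({0}ᶜ) := by
      ext τ; simp [hUdef, and_assoc, sub_ne_zero]
    rw [this]
    exact isOpen_Ioo.inter (isOpen_compl_singleton.preimage
      (continuous_const.sub (continuous_const.mul continuous_id)))
  set L : ℝ → ℝ := fun τ => -(1 / (2 * τ)) + 1 / (2 * (1 - τ)) + z / (1 - z * τ) with hLdef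
  set L' : ℝ → ℝ := fun τ => 1 / (2 * τ ^ 2) + 1 / (2 * (1 - τ) ^ 2) + z ^ 2 / (1 - z * τ) ^ 2
    with hL'def
  -- derivatives of ψ
  have hψd1 : ∀ τ ∈ U, HasDerivAt ψ (a * τ⁻¹ - (1 - a) * (1 - τ)⁻¹) τ := by
    rintro τ ⟨h0, h1, hz⟩
    have hτ : τ ≠ 0 := h0.ne'
    have h1τ : (1:ℝ) - τ ≠ 0 := sub_ne_zero.mpr h1.ne'
    have A := (Real.hasDerivAt_log hτ).const_mul a
    have B := (((hasDerivAt_id τ).const_sub 1).log h1τ).const_mul (1 - a)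
    have := A.add B
    refine this.congr_deriv ?_
    symm
    simp only [id_eq, Pi.pow_apply, Pi.mul_apply, Pi.inv_apply]
    field_simp
    ring
  have hψd2 : ∀ τ ∈ U, HasDerivAt (fun τ => a * τ⁻¹ - (1 - a) * (1 - τ)⁻¹)
      (-(a * (τ ^ 2)⁻¹) - (1 - a) * ((1 - τ) ^ 2)⁻¹) τ := by
    rintro τ ⟨h0, h1, hz⟩
    have hτ : τ ≠ 0 := h0.ne'
    have h1τ : (1:ℝ) - τ ≠ 0 := sub_ne_zero.mpr h1.ne'
    have A := (hasDerivAt_inv hτ).const_mul a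
    have B := (((hasDerivAt_id τ).const_sub 1).inv h1τ).const_mul (1 - a)
    have := A.sub B
    refine this.congr_deriv ?_
    symm
    simp only [id_eq, Pi.pow_apply, Pi.mul_apply, Pi.inv_apply]
    field_simp
  have hψd3 : ∀ τ ∈ U, HasDerivAt (fun τ => -(a * (τ ^ 2)⁻¹) - (1 - a) * ((1 - τ) ^ 2)⁻¹)
      (2 * a * (τ ^ 3)⁻¹ - 2 * (1 - a) * ((1 - τ) ^ 3)⁻¹) τ := by
    rintro τ ⟨h0, h1, hz⟩
    have hτ : τ ≠ 0 := h0.ne'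
    have h1τ : (1:ℝ) - τ ≠ 0 := sub_ne_zero.mpr h1.ne'
    have A := (((hasDerivAt_pow 2 τ).inv (pow_ne_zero 2 hτ)).const_mul a).neg
    have B := ((((hasDerivAt_id τ).const_sub 1).pow 2).inv (pow_ne_zero 2 h1τ)).const_mul (1 - a)
    have := A.sub B
    refine this.congr_deriv ?_
    symm
    simp only [id_eq, Pi.pow_apply, Pi.mul_apply, Pi.inv_apply]
    field_simp
    ring
  have hψd4 : ∀ τ ∈ U, HasDerivAt (fun τ => 2 * a * (τ ^ 3)⁻¹ - 2 * (1 - a) * ((1 - τ) ^ 3)⁻¹)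
      (-(6 * a * (τ ^ 4)⁻¹) - 6 * (1 - a) * ((1 - τ) ^ 4)⁻¹) τ := by
    rintro τ ⟨h0, h1, hz⟩
    have hτ : τ ≠ 0 := h0.ne'
    have h1τ : (1:ℝ) - τ ≠ 0 := sub_ne_zero.mpr h1.ne'
    have A := ((hasDerivAt_pow 3 τ).inv (pow_ne_zero 3 hτ)).const_mul (2 * a)
    have B := ((((hasDerivAt_id τ).const_sub 1).pow 3).inv (pow_ne_zero 3 h1τ)).const_mul
      (2 * (1 - a))
    have := A.sub B
    refine this.congr_deriv ?_
    symm
    simp only [id_eq, Pi.pow_apply, Pi.mul_apply, Pi.inv_apply]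
    field_simp
    ring
  -- derivative of L
  have hLd : ∀ τ ∈ U, HasDerivAt L (L' τ) τ := by
    rintro τ ⟨h0, h1, hz⟩
    have hτ : τ ≠ 0 := h0.ne'
    have h1τ : (1:ℝ) - τ ≠ 0 := sub_ne_zero.mpr h1.ne'
    have t1 := ((hasDerivAt_const τ (1:ℝ)).div ((hasDerivAt_id τ).const_mul 2)
      (by simpa using hτ)).neg
    have t2 := (hasDerivAt_const τ (1:ℝ)).div (((hasDerivAt_id τ).const_sub 1).const_mul 2)
      (by simpa using h1τ)
    have t3 := (hasDerivAt_const τ z).div (((hasDerivAt_id τ).const_mul z).const_sub 1) hz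
    have := (t1.add t2).add t3
    rw [hLdef, hL'def]
    refine this.congr_deriv ?_
    symm
    simp only [id_eq, Pi.pow_apply, Pi.mul_apply, Pi.inv_apply]
    field_simp
    ring
  -- derivative of f
  have hfd1 : ∀ τ ∈ U, HasDerivAt f (f τ * L τ) τ := by
    rintro τ ⟨h0, h1, hz⟩
    have hτ : τ ≠ 0 := h0.ne'
    have h01 : (0:ℝ) < 1 - τ := by linarith
    have h1τ : (1:ℝ) - τ ≠ 0 := h01.ne'
    have hg := Real.hasDerivAt_rpow_const (p := -(1:ℝ)/2) (Or.inl hτ)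
    have hh := ((hasDerivAt_id τ).const_sub 1).rpow_const (p := -(1:ℝ)/2) (Or.inl h1τ)
    have hden := ((hasDerivAt_id τ).const_mul z).const_sub 1
    have := (hg.mul hh).div hden hz
    simp only [id_eq, Pi.mul_apply] at this
    have hz' : (1:ℝ) - τ * z ≠ 0 := by rwa [mul_comm z τ] at hz
    refine this.congr_deriv ?_
    symm
    show (τ ^ (-(1:ℝ)/2) * (1 - τ) ^ (-(1:ℝ)/2) / (1 - z * τ)) * L τ = _
    rw [hLdef]
    rw [Real.rpow_sub h0, Real.rpow_one, Real.rpow_sub h01, Real.rpow_one]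
    set A := τ ^ (-(1:ℝ)/2) with hA
    set B := (1 - τ) ^ (-(1:ℝ)/2) with hB
    field_simp
    ring
  have hfd2 : ∀ τ ∈ U, HasDerivAt (fun τ => f τ * L τ) (f τ * (L τ * L τ + L' τ)) τ := by
    rintro τ hτ
    have := (hfd1 τ hτ).mul (hLd τ hτ)
    refine this.congr_deriv ?_
    symm
    ring
  -- deriv identities on U
  have k1 : ∀ τ ∈ U, deriv ψ τ = a * τ⁻¹ - (1 - a) * (1 - τ)⁻¹ := fun τ hτ => (hψd1 τ hτ).deriv
  have k2 : ∀ τ ∈ U, deriv (deriv ψ) τ = -(a * (τ ^ 2)⁻¹) - (1 - a) * ((1 - τ) ^ 2)⁻¹ := by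
    intro τ hτ
    have ev : deriv ψ =ᶠ[𝓝 τ] fun τ => a * τ⁻¹ - (1 - a) * (1 - τ)⁻¹ :=
      eventually_of_mem (hUopen.mem_nhds hτ) k1
    rw [ev.deriv_eq]
    exact (hψd2 τ hτ).deriv
  have k3 : ∀ τ ∈ U, deriv (deriv (deriv ψ)) τ
      = 2 * a * (τ ^ 3)⁻¹ - 2 * (1 - a) * ((1 - τ) ^ 3)⁻¹ := by
    intro τ hτ
    have ev : deriv (deriv ψ) =ᶠ[𝓝 τ] fun τ => -(a * (τ ^ 2)⁻¹) - (1 - a) * ((1 - τ) ^ 2)⁻¹ :=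
      eventually_of_mem (hUopen.mem_nhds hτ) k2
    rw [ev.deriv_eq]
    exact (hψd3 τ hτ).deriv
  have k4 : deriv (deriv (deriv (deriv ψ))) a
      = -(6 * a * (a ^ 4)⁻¹) - 6 * (1 - a) * ((1 - a) ^ 4)⁻¹ := by
    have ev : deriv (deriv (deriv ψ)) =ᶠ[𝓝 a]
        fun τ => 2 * a * (τ ^ 3)⁻¹ - 2 * (1 - a) * ((1 - τ) ^ 3)⁻¹ :=
      eventually_of_mem (hUopen.mem_nhds haU) k3
    rw [ev.deriv_eq]
    exact (hψd4 a haU).deriv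
  -- iterated derivatives
  have i2 : iteratedDeriv 2 ψ a = -(1 / (a * (1 - a))) := by
    rw [iteratedDeriv_succ, iteratedDeriv_one, k2 a haU]
    field_simp
    ring
  have i3 : iteratedDeriv 3 ψ a = 2 * a * (a ^ 3)⁻¹ - 2 * (1 - a) * ((1 - a) ^ 3)⁻¹ := by
    rw [iteratedDeriv_succ, iteratedDeriv_succ, iteratedDeriv_one]
    exact k3 a haU
  have i4 : iteratedDeriv 4 ψ a = -(6 * a * (a ^ 4)⁻¹) - 6 * (1 - a) * ((1 - a) ^ 4)⁻¹ := by
    rw [iteratedDeriv_succ, iteratedDeriv_succ, iteratedDeriv_succ, iteratedDeriv_one]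
    exact k4
  have kf1 : ∀ τ ∈ U, deriv f τ = f τ * L τ := fun τ hτ => (hfd1 τ hτ).deriv
  have if1 : iteratedDeriv 1 f a = f a * L a := by
    rw [iteratedDeriv_one]; exact kf1 a haU
  have if2 : iteratedDeriv 2 f a = f a * (L a * L a + L' a) := by
    rw [iteratedDeriv_succ, iteratedDeriv_one]
    have ev : deriv f =ᶠ[𝓝 a] fun τ => f τ * L τ :=
      eventually_of_mem (hUopen.mem_nhds haU) kf1
    rw [ev.deriv_eq]
    exact (hfd2 a haU).deriv
  have hfa : f a ≠ 0 := by
    have h1 : (0:ℝ) < a ^ (-(1:ℝ)/2) := Real.rpow_pos_of_pos ha0 _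
    have h2 : (0:ℝ) < (1 - a) ^ (-(1:ℝ)/2) := Real.rpow_pos_of_pos h1a _
    exact div_ne_zero (mul_pos h1 h2).ne' (by simpa [mul_comm] using hza)
  -- final computation
  simp only [F, Ψ, c, if1, if2, i2, i3, i4]
  rw [mul_div_cancel_left₀ _ hfa, mul_div_cancel_left₀ _ hfa]
  rw [hLdef, hL'def]
  have h2 : (1 - z * a) ≠ 0 := hza
  have h3 : (1 - a * z) ≠ 0 := by simpa [mul_comm] using hza
  field_simp
  ring
end
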